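/- Let U, V be k-dimensional F_q-subspaces of F_{q^n}. The following are equivalent: (1) dim(U ∩ αV) ≤ 1 for all α ∈ F_{q^n}^*; (2) for all nonzero a, c ∈ U and nonzero b, d ∈ V, the equality ab = cd implies aF_q = cF_q and bF_q = dF_q. -/

import Mathlib

open Module

/-- The cyclic shift `αV = {αv : v ∈ V}`. -/
noncomputable def cyclicShift {K L : Type*} [Field K] [Field L] [Algebra K L]
    (α : L) (U : Submodule K L) : Submodule K L :=
  U.map (LinearMap.mulLeft K α)

/-- For `k`-dimensional `F_q`-subspaces `U, V` of `F_{q^n}`,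
the following are equivalent: (1) `dim(U ∩ αV) ≤ 1` for all `α ∈ F_{q^n}^*`;
(2) for all nonzero `a, c ∈ U` and nonzero `b, d ∈ V`, `ab = cd` implies
`aF_q = cF_q` and `bF_q = dF_q`. -/
theorem stmt_5 (q n k : ℕ) (hq : IsPrimePow q) (hn : 0 < n) (hk : 0 < k)
    (K L : Type*) [Field K] [Fintype K] [Field L] [Fintype L] [Algebra K L]
    (hK : Fintype.card K = q) (hL : Fintype.card L = q ^ n)
    (U V : Submodule K L) (hU : finrank K U = k) (hV : finrank K V = k) :
    (∀ α : L, α ≠ 0 → finrank K ↥(U ⊓ cyclicShift α V) ≤ 1) ↔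
    (∀ a ∈ U, ∀ c ∈ U, ∀ b ∈ V, ∀ d ∈ V,
      a ≠ 0 → c ≠ 0 → b ≠ 0 → d ≠ 0 → a * b = c * d →
      Submodule.span K ({a} : Set L) = Submodule.span K {c} ∧
      Submodule.span K ({b} : Set L) = Submodule.span K {d}) := by
  constructor
  · intro h1 a ha c hc b hb d hd ha0 hc0 hb0 hd0 habcd
    set α : L := a * d⁻¹ with hα
    have hα0 : α ≠ 0 := by
      simp [hα, ha0, hd0]
    have haW : a ∈ U ⊓ cyclicShift α V := by
      refine ⟨ha, ?_⟩
      exact ⟨d, hd, by simp only [LinearMap.mulLeft_apply, hα]; exact inv_mul_cancel_right₀ hd0 a⟩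
    have hcW : c ∈ U ⊓ cyclicShift α V := by
      refine ⟨hc, ?_⟩
      refine ⟨b, hb, ?_⟩
      simp only [LinearMap.mulLeft_apply, hα]
      field_simp
      linear_combination habcd
    have hfin := h1 α hα0
    have hle1 : Submodule.span K ({a} : Set L) ≤ U ⊓ cyclicShift α V :=
      (Submodule.span_singleton_le_iff_mem _ _).mpr haW
    have hle2 : Submodule.span K ({c} : Set L) ≤ U ⊓ cyclicShift α V :=
      (Submodule.span_singleton_le_iff_mem _ _).mpr hcW
    have h1a : Submodule.span K ({a} : Set L) = U ⊓ cyclicShift α V :=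
      Submodule.eq_of_le_of_finrank_le hle1 (by rw [finrank_span_singleton ha0]; exact hfin)
    have h1c : Submodule.span K ({c} : Set L) = U ⊓ cyclicShift α V :=
      Submodule.eq_of_le_of_finrank_le hle2 (by rw [finrank_span_singleton hc0]; exact hfin)
    have hac : Submodule.span K ({a} : Set L) = Submodule.span K {c} := h1a.trans h1c.symm
    refine ⟨hac, ?_⟩
    have hcmem : c ∈ Submodule.span K ({a} : Set L) := hac ▸ Submodule.mem_span_singleton_self c
    obtain ⟨μ, hμ⟩ := Submodule.mem_span_singleton.mp hcmem
    have hμ0 : IsUnit μ := by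
      refine isUnit_iff_ne_zero.mpr ?_
      rintro rfl
      simp at hμ
      exact hc0 hμ.symm
    have hbd : b = μ • d := by
      have h2 : a * b = (μ • a) * d := by rw [hμ]; exact habcd
      rw [Algebra.smul_def] at h2 ⊢
      have h3 : a * b = a * (algebraMap K L μ * d) := by linear_combination h2
      exact mul_left_cancel₀ ha0 h3
    rw [hbd, Submodule.span_singleton_smul_eq hμ0]
  · intro h2 α hα0
    by_cases hW : U ⊓ cyclicShift α V = ⊥
    · rw [hW, finrank_bot]; omega
    obtain ⟨x, hxW, hx0⟩ := Submodule.exists_mem_ne_zero_of_ne_bot hW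
    have hle : U ⊓ cyclicShift α V ≤ Submodule.span K {x} := by
      intro y hyW
      by_cases hy0 : y = 0
      · simp [hy0]
      obtain ⟨hxU, b, hbV, hbx⟩ := hxW
      obtain ⟨hyU, d, hdV, hdy⟩ := hyW
      simp only [LinearMap.mulLeft_apply] at hbx hdy
      have hb0 : b ≠ 0 := by rintro rfl; simp at hbx; exact hx0 hbx.symm
      have hd0 : d ≠ 0 := by rintro rfl; simp at hdy; exact hy0 hdy.symm
      have hmul : x * d = y * b := by rw [← hbx, ← hdy]; ring
      have := (h2 x hxU y hyU d hdV b hbV hx0 hy0 hd0 hb0 hmul).1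
      rw [this]
      exact Submodule.mem_span_singleton_self y
    calc finrank K ↥(U ⊓ cyclicShift α V) ≤ finrank K ↥(Submodule.span K ({x} : Set L)) :=
          Submodule.finrank_mono hle
      _ = 1 := finrank_span_singleton hx0
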